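/- If two DAGs G and G' on the same vertex set have identical skeletons but G' contains a v-structure i → k ← j that is not a v-structure in G, then there exists a subset S containing k such that i and j are d-separated given S in G but d-connected given S in G'; consequently D_sep(G) is not a subset of D_sep(G'). -/

import Mathlib

open scoped Classical

/-- A directed acyclic graph on `Fin p`: a finite edge set together with a
topological ordering witnessing acyclicity. -/
structure DAG (p : ℕ) where
  edges : Finset (Fin p × Fin p)
  acyclic : ∃ σ : Equiv.Perm (Fin p), ∀ e ∈ edges, σ.symm e.1 < σ.symm e.2

namespace DAG

variable {p : ℕ}

def edgeRel (G : DAG p) (a b : Fin p) : Prop := (a, b) ∈ G.edges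

/-- adjacency in the skeleton -/
def adj (G : DAG p) (a b : Fin p) : Prop := (a, b) ∈ G.edges ∨ (b, a) ∈ G.edges

/-- the skeleton as a finite set of unordered pairs -/
def skeleton (G : DAG p) : Finset (Sym2 (Fin p)) := G.edges.image (fun e => s(e.1, e.2))

/-- `b` is a collider on a path segment `a - b - c`. -/
def isCollider (G : DAG p) (a b c : Fin p) : Prop := (a, b) ∈ G.edges ∧ (c, b) ∈ G.edges

/-- `b` is in `S` or an ancestor of some element of `S`. -/
def ancestorOfSet (G : DAG p) (b : Fin p) (S : Finset (Fin p)) : Prop :=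
  ∃ s ∈ S, Relation.ReflTransGen G.edgeRel b s

/-- a (simple, undirected) path from `i` to `j` in the skeleton, as a list of vertices -/
def IsTrail (G : DAG p) (i j : Fin p) (l : List (Fin p)) : Prop :=
  l.Chain' G.adj ∧ l.Nodup ∧ 2 ≤ l.length ∧ l.head? = some i ∧ l.getLast? = some j

/-- the path `l` d-connects its endpoints given `S`: every collider on it is in `S` or
has a descendant in `S`, and every non-collider on it is not in `S`. -/
def dConnectsPath (G : DAG p) (S : Finset (Fin p)) (l : List (Fin p)) : Prop :=
  ∀ a b c : Fin p, [a, b, c] <:+: l →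
    (G.isCollider a b c → G.ancestorOfSet b S) ∧ (¬ G.isCollider a b c → b ∉ S)

def dConnected (G : DAG p) (i j : Fin p) (S : Finset (Fin p)) : Prop :=
  ∃ l : List (Fin p), G.IsTrail i j l ∧ G.dConnectsPath S l

def dSep (G : DAG p) (i j : Fin p) (S : Finset (Fin p)) : Prop :=
  i ≠ j ∧ ¬ G.dConnected i j S

end DAG

/-- A (pairwise) conditional independence model: `CI i j S` means
`X_i ⫫ X_j | X_S`. -/
abbrev CIModel (p : ℕ) := Fin p → Fin p → Finset (Fin p) → Prop

variable {p : ℕ}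

/-- `G` is Markov w.r.t. the CI model: every d-separation is a CI statement. -/
def Markov (G : DAG p) (CI : CIModel p) : Prop :=
  ∀ i j S, G.dSep i j S → CI i j S

/-- Markov equivalence: same d-separation statements. -/
def MarkovEquiv (G G' : DAG p) : Prop :=
  ∀ i j S, G.dSep i j S ↔ G'.dSep i j S

/-- `π` is a topological ordering of `G`. -/
def IsTopOrder (G : DAG p) (π : Equiv.Perm (Fin p)) : Prop :=
  ∀ e ∈ G.edges, π.symm e.1 < π.symm e.2

/-- the predecessors `{π 0, …, π (k-1)}` of position `k` in the ordering `π` -/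
def predSet (π : Equiv.Perm (Fin p)) (k : Fin p) : Finset (Fin p) :=
  (Finset.univ.filter (fun m => m < k)).image π

/-- The minimal I-map `G_π`: for `j < k` there is an edge `π j → π k` iff
`π j` and `π k` are conditionally dependent given all other predecessors of `π k`. -/
noncomputable def minimalIMap (CI : CIModel p) (π : Equiv.Perm (Fin p)) : DAG p where
  edges := Finset.univ.filter (fun q : Fin p × Fin p =>
    ∃ j k : Fin p, j < k ∧ q = (π j, π k) ∧ ¬ CI (π j) (π k) ((predSet π k).erase (π j)))
  acyclic := ⟨π, by
    intro e he
    rw [Finset.mem_filter] at he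
    obtain ⟨-, j, k, hjk, rfl, -⟩ := he
    simpa using hjk⟩

/-- the minimal number of edges of a minimal I-map `G_π` over all permutations `π` -/
noncomputable def spScore (CI : CIModel p) : ℕ :=
  ((Finset.univ : Finset (Equiv.Perm (Fin p))).image
    (fun π => (minimalIMap CI π).edges.card)).min' (Finset.univ_nonempty.image _)

/-- adjacency-faithfulness: endpoints of edges of `G` are conditionally dependent
given any conditioning set. -/
def AdjFaithful (G : DAG p) (CI : CIModel p) : Prop :=
  ∀ e ∈ G.edges, ∀ S : Finset (Fin p), e.1 ∉ S → e.2 ∉ S →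
    ¬ CI e.1 e.2 S ∧ ¬ CI e.2 e.1 S

/-- the sparsest Markov representation assumption -/
def SMR (G : DAG p) (CI : CIModel p) : Prop :=
  Markov G CI ∧
    ∀ G' : DAG p, Markov G' CI → ¬ MarkovEquiv G' G → G.edges.card < G'.edges.card

/-- the set of d-separation statements of `G` -/
def DsepSet (G : DAG p) : Set (Fin p × Fin p × Finset (Fin p)) :=
  {t | G.dSep t.1 t.2.1 t.2.2}

/-- P-minimality: no Markov DAG entails strictly more d-separations. -/
def PMinimal (G : DAG p) (CI : CIModel p) : Prop :=
  ∀ G' : DAG p, Markov G' CI → ¬ (DsepSet G ⊂ DsepSet G')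


/-- `(i, k, j)` is a v-structure: `i → k ← j` with `i`, `j` non-adjacent. -/
def IsVStructure (G : DAG p) (i k j : Fin p) : Prop :=
  (i, k) ∈ G.edges ∧ (j, k) ∈ G.edges ∧ ¬ G.adj i j ∧ i ≠ j

section Auxiliary

lemma DAG.topOrder_transGen (G : DAG p) (σ : Equiv.Perm (Fin p))
    (h : ∀ e ∈ G.edges, σ.symm e.1 < σ.symm e.2) {a b : Fin p}
    (hab : Relation.TransGen G.edgeRel a b) : σ.symm a < σ.symm b := by
  induction hab with
  | single h' => exact h _ h'
  | tail _ h' ih => exact ih.trans (h _ h')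

lemma DAG.no_cycle (G : DAG p) {a : Fin p} : ¬ Relation.TransGen G.edgeRel a a := by
  obtain ⟨σ, hσ⟩ := G.acyclic
  intro h
  exact lt_irrefl _ (G.topOrder_transGen σ hσ h)

lemma DAG.edge_ne (G : DAG p) {a b : Fin p} (h : (a, b) ∈ G.edges) : a ≠ b := by
  rintro rfl
  exact G.no_cycle (Relation.TransGen.single (show G.edgeRel a a from h))

lemma DAG.mem_skeleton (G : DAG p) (a b : Fin p) : s(a, b) ∈ G.skeleton ↔ G.adj a b := by
  unfold DAG.skeleton DAG.adj
  simp only [Finset.mem_image, Prod.exists, Sym2.eq, Sym2.rel_iff', Prod.mk.injEq,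
    Prod.swap_prod_mk]
  constructor
  · rintro ⟨x, y, hxy, (⟨rfl, rfl⟩ | ⟨rfl, rfl⟩)⟩
    · exact Or.inl hxy
    · exact Or.inr hxy
  · rintro (h | h)
    · exact ⟨a, b, h, Or.inl ⟨rfl, rfl⟩⟩
    · exact ⟨b, a, h, Or.inr ⟨rfl, rfl⟩⟩

lemma DAG.adj_symm (G : DAG p) {a b : Fin p} (h : G.adj a b) : G.adj b a := h.symm

lemma DAG.dConnected_symm (G : DAG p) {i j : Fin p} {S : Finset (Fin p)}
    (h : G.dConnected i j S) : G.dConnected j i S := by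
  obtain ⟨l, ⟨hc, hn, hl, hh, hg⟩, H⟩ := h
  refine ⟨l.reverse, ⟨?_, by simpa using hn, by simpa using hl, by simpa using hg,
    by simpa using hh⟩, ?_⟩
  · refine List.isChain_reverse.mpr ?_
    exact hc.imp (fun _ _ h' => h'.symm)
  · intro a b c habc
    have habc' : [c, b, a] <:+: l := by
      have : ([c, b, a]).reverse <:+: l.reverse := by simpa using habc
      exact (List.reverse_infix).mp this
    obtain ⟨h1, h2⟩ := H c b a habc'
    constructor
    · intro hcol
      exact h1 ⟨hcol.2, hcol.1⟩
    · intro hncol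
      exact h2 (fun hcol => hncol ⟨hcol.2, hcol.1⟩)

lemma DAG.dSep_symm (G : DAG p) {i j : Fin p} {S : Finset (Fin p)}
    (h : G.dSep i j S) : G.dSep j i S :=
  ⟨h.1.symm, fun hc => h.2 (G.dConnected_symm hc)⟩

/-- the set of parents of `j` in `G` -/
noncomputable def DAG.parents (G : DAG p) (j : Fin p) : Finset (Fin p) :=
  Finset.univ.filter (fun a => (a, j) ∈ G.edges)

lemma DAG.mem_parents {G : DAG p} {a j : Fin p} :
    a ∈ G.parents j ↔ (a, j) ∈ G.edges := by simp [DAG.parents]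

lemma DAG.aux_chain (G : DAG p) (j : Fin p) :
    ∀ (l : List (Fin p)) (b c : Fin p), (b, c) ∈ G.edges →
      Relation.ReflTransGen G.edgeRel j b →
      (b :: c :: l).Chain' G.adj →
      (∀ a x y : Fin p, [a, x, y] <:+: (b :: c :: l) →
        (G.isCollider a x y → G.ancestorOfSet x (G.parents j)) ∧
        (¬ G.isCollider a x y → x ∉ G.parents j)) →
      Relation.TransGen G.edgeRel j ((b :: c :: l).getLast (by simp)) := by
  intro l
  induction l with
  | nil =>
    intro b c hbc hjb _ _
    simpa using Relation.TransGen.tail' hjb hbc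
  | cons d l' ih =>
    intro b c hbc hjb hchain H
    have htriple : [b, c, d] <:+: b :: c :: d :: l' := ⟨[], l', rfl⟩
    by_cases hdc : (d, c) ∈ G.edges
    · exfalso
      obtain ⟨s, hs, hcs⟩ := (H b c d htriple).1 ⟨hbc, hdc⟩
      have hsj : (s, j) ∈ G.edges := DAG.mem_parents.mp hs
      have hcycle : Relation.TransGen G.edgeRel j j :=
        (Relation.TransGen.tail' hjb hbc).trans
          (Relation.TransGen.tail' hcs hsj)
      exact G.no_cycle hcycle
    · have hcd : (c, d) ∈ G.edges := by
        rcases (List.isChain_cons_cons.mp hchain.tail).1 with h | h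
        · exact h
        · exact absurd h hdc
      have hjc : Relation.ReflTransGen G.edgeRel j c := hjb.tail hbc
      have H' : ∀ a x y : Fin p, [a, x, y] <:+: c :: d :: l' →
          (G.isCollider a x y → G.ancestorOfSet x (G.parents j)) ∧
          (¬ G.isCollider a x y → x ∉ G.parents j) :=
        fun a x y hxy => H a x y (hxy.trans (List.suffix_cons b _).isInfix)
      have := ih c d hcd hjc hchain.tail H'
      simpa [List.getLast_cons] using this

lemma DAG.local_markov (G : DAG p) {i j : Fin p} (hij : i ≠ j)
    (hnij : (i, j) ∉ G.edges) (hnji : ¬ Relation.TransGen G.edgeRel j i) :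
    G.dSep i j (G.parents j) := by
  refine ⟨hij, fun hcon => ?_⟩
  obtain ⟨l, ⟨hc, hn, hl, hh, hg⟩, H⟩ := G.dConnected_symm hcon
  match l, hh, hl with
  | (x :: v :: rest), hh, hl =>
    have hx : x = j := by simpa using hh
    subst hx
    cases rest with
    | nil =>
      have hv : v = i := by simpa using hg
      subst hv
      rcases (List.isChain_cons_cons.mp hc).1 with h | h
      · exact hnji (Relation.TransGen.single h)
      · exact hnij h
    | cons d rest' =>
      have hjv : (x, v) ∈ G.edges := by
        rcases (List.isChain_cons_cons.mp hc).1 with h | h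
        · exact h
        · exfalso
          have htriple : [x, v, d] <:+: x :: v :: d :: rest' := ⟨[], rest', rfl⟩
          by_cases hcol : G.isCollider x v d
          · exact G.no_cycle ((Relation.TransGen.single (show G.edgeRel x v from hcol.1)).trans
              (Relation.TransGen.single (show G.edgeRel v x from h)))
          · exact (H x v d htriple).2 hcol (DAG.mem_parents.mpr h)
      have hlast := G.aux_chain x (d :: rest') x v hjv Relation.ReflTransGen.refl hc H
      have : (x :: v :: d :: rest').getLast (by simp) = i := by
        have := List.getLast?_eq_getLast (l := x :: v :: d :: rest') (by simp)
        rw [this] at hg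
        exact Option.some_injective _ hg
      rw [this] at hlast
      exact hnji hlast

end Auxiliary

/-- If `G` and `G'` have identical skeletons but `G'` contains a v-structure
`i → k ← j` not present in `G`, then some set `S` containing `k` d-separates `i`
and `j` in `G` but d-connects them in `G'`; consequently the d-separation
statements of `G` are not a subset of those of `G'`. -/
theorem vStructure_dsep_incomparable (G G' : DAG p)
    (hskel : G.skeleton = G'.skeleton) (i k j : Fin p)
    (hv' : IsVStructure G' i k j) (hv : ¬ IsVStructure G i k j) :
    (∃ S : Finset (Fin p), k ∈ S ∧ G.dSep i j S ∧ G'.dConnected i j S) ∧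
      ¬ DsepSet G ⊆ DsepSet G' := by
  obtain ⟨hik', hjk', hnadj', hij⟩ := hv'
  have hadj : ∀ a b, G.adj a b ↔ G'.adj a b := by
    intro a b
    rw [← G.mem_skeleton, ← G'.mem_skeleton, hskel]
  have hnadj : ¬ G.adj i j := fun h => hnadj' ((hadj i j).mp h)
  have haik : G.adj i k := (hadj i k).mpr (Or.inl hik')
  have hajk : G.adj j k := (hadj j k).mpr (Or.inl hjk')
  have hik_ne : i ≠ k := G'.edge_ne hik'
  have hjk_ne : j ≠ k := G'.edge_ne hjk'
  -- `[i, k, j]` d-connects `i` and `j` in `G'` given any `S ∋ k`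
  have hconn : ∀ S : Finset (Fin p), k ∈ S → G'.dConnected i j S := by
    intro S hkS
    refine ⟨[i, k, j], ⟨?_, ?_, by simp, rfl, rfl⟩, ?_⟩
    · exact List.isChain_cons_cons.mpr ⟨Or.inl hik',
        List.isChain_cons_cons.mpr ⟨Or.inr hjk', List.isChain_singleton _⟩⟩
    · simp [hik_ne, hij, hjk_ne.symm]
    · intro a b c habc
      have heq : [a, b, c] = [i, k, j] := habc.sublist.eq_of_length (by simp)
      simp only [List.cons.injEq, and_true] at heq
      obtain ⟨rfl, rfl, rfl⟩ := heq
      exact ⟨fun _ => ⟨_, hkS, Relation.ReflTransGen.refl⟩,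
        fun hnc => absurd ⟨hik', hjk'⟩ hnc⟩
  have key : ∀ a b : Fin p, a ≠ b → ¬ G.adj a b → (k, b) ∈ G.edges →
      ¬ Relation.TransGen G.edgeRel b a → ∃ S, k ∈ S ∧ G.dSep a b S :=
    fun a b hab hnadjab hkb hnba =>
      ⟨G.parents b, DAG.mem_parents.mpr hkb,
        G.local_markov hab (fun h => hnadjab (Or.inl h)) hnba⟩
  have hcase : (i, k) ∉ G.edges ∨ (j, k) ∉ G.edges := by
    by_contra h
    push_neg at h
    exact hv ⟨h.1, h.2, hnadj, hij⟩
  have hS : ∃ S, k ∈ S ∧ G.dSep i j S := by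
    have h1 : (k, j) ∈ G.edges ∨ (k, i) ∈ G.edges := by
      rcases hcase with h | h
      · rcases haik with h' | h'
        · exact absurd h' h
        · exact Or.inr h'
      · rcases hajk with h' | h'
        · exact absurd h' h
        · exact Or.inl h'
    rcases h1 with hkj | hki
    · by_cases hba : Relation.TransGen G.edgeRel j i
      · -- j is an ancestor of i, so k → i in G and i is not an ancestor of j
        have hki : (k, i) ∈ G.edges := by
          rcases haik with h' | h'
          · exfalso
            exact G.no_cycle ((Relation.TransGen.head (show G.edgeRel i k from h')
              (Relation.TransGen.head (show G.edgeRel k j from hkj) hba)))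
          · exact h'
        have hnab : ¬ Relation.TransGen G.edgeRel i j := fun h => G.no_cycle (h.trans hba)
        obtain ⟨S, hkS, hsep⟩ := key j i hij.symm (fun h => hnadj (G.adj_symm h)) hki hnab
        exact ⟨S, hkS, G.dSep_symm hsep⟩
      · obtain ⟨S, hkS, hsep⟩ := key i j hij hnadj hkj hba
        exact ⟨S, hkS, hsep⟩
    · by_cases hab : Relation.TransGen G.edgeRel i j
      · have hkj : (k, j) ∈ G.edges := by
          rcases hajk with h' | h'
          · exfalso
            exact G.no_cycle ((Relation.TransGen.head (show G.edgeRel j k from h')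
              (Relation.TransGen.head (show G.edgeRel k i from hki) hab)))
          · exact h'
        have hnba : ¬ Relation.TransGen G.edgeRel j i := fun h => G.no_cycle (hab.trans h)
        obtain ⟨S, hkS, hsep⟩ := key i j hij hnadj hkj hnba
        exact ⟨S, hkS, hsep⟩
      · obtain ⟨S, hkS, hsep⟩ := key j i hij.symm (fun h => hnadj (G.adj_symm h)) hki hab
        exact ⟨S, hkS, G.dSep_symm hsep⟩
  obtain ⟨S, hkS, hsep⟩ := hS
  refine ⟨⟨S, hkS, hsep, hconn S hkS⟩, fun hsub => ?_⟩
  have hmem : (i, j, S) ∈ DsepSet G := hsep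
  exact (hsub hmem).2 (hconn S hkS)
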